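/- For any 1 ≤ q < ∞, there exists a continuous path τ ↦ V_τ, 0 ≤ τ ≤ 1/2, of invertible bounded linear operators on (ℓ_q ⊕ ℓ_q ⊕ ℓ_q)_q, with V_0 the identity, V_{1/2}(u,v,w) = (u,w,v), and ‖V_τ‖ ≤ 2 for all τ. -/

import Mathlib

/-- The sequence space `ℓ_q`. -/
noncomputable def lpSeq (q : ℝ) (hq : 1 ≤ q) : Type :=
  lp (fun _ : ℕ => ℝ) (ENNReal.ofReal q)

noncomputable instance (q : ℝ) (hq : 1 ≤ q) : NormedAddCommGroup (lpSeq q hq) :=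
  haveI : Fact (1 ≤ ENNReal.ofReal q) :=
    ⟨by simpa [ENNReal.ofReal_one] using ENNReal.ofReal_le_ofReal hq⟩
  inferInstanceAs (NormedAddCommGroup (lp (fun _ : ℕ => ℝ) (ENNReal.ofReal q)))

noncomputable instance (q : ℝ) (hq : 1 ≤ q) : NormedSpace ℝ (lpSeq q hq) :=
  haveI : Fact (1 ≤ ENNReal.ofReal q) :=
    ⟨by simpa [ENNReal.ofReal_one] using ENNReal.ofReal_le_ofReal hq⟩
  inferInstanceAs (NormedSpace ℝ (lp (fun _ : ℕ => ℝ) (ENNReal.ofReal q)))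

/-- The `q`-direct sum `(ℓ_q ⊕ ℓ_q ⊕ ℓ_q)_q` of three copies of `ℓ_q`. -/
noncomputable def tripleSum (q : ℝ) (hq : 1 ≤ q) : Type :=
  PiLp (ENNReal.ofReal q) (fun _ : Fin 3 => lpSeq q hq)

noncomputable instance (q : ℝ) (hq : 1 ≤ q) : NormedAddCommGroup (tripleSum q hq) :=
  haveI : Fact (1 ≤ ENNReal.ofReal q) :=
    ⟨by simpa [ENNReal.ofReal_one] using ENNReal.ofReal_le_ofReal hq⟩
  inferInstanceAs (NormedAddCommGroup (PiLp (ENNReal.ofReal q) (fun _ : Fin 3 => lpSeq q hq)))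

noncomputable instance (q : ℝ) (hq : 1 ≤ q) : NormedSpace ℝ (tripleSum q hq) :=
  haveI : Fact (1 ≤ ENNReal.ofReal q) :=
    ⟨by simpa [ENNReal.ofReal_one] using ENNReal.ofReal_le_ofReal hq⟩
  inferInstanceAs (NormedSpace ℝ (PiLp (ENNReal.ofReal q) (fun _ : Fin 3 => lpSeq q hq)))

noncomputable section
namespace PathAux
open Real
open scoped NNReal ENNReal

/-! ### The index involution pairing `2k ↔ 2k+1` and the sign `ε`. -/

def sw (n : ℕ) : ℕ := if Even n then n + 1 else n - 1

lemma sw_sw (n : ℕ) : sw (sw n) = n := by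
  rcases Nat.even_or_odd n with h | h
  · have h1 : ¬ Even (n+1) := by simp [Nat.even_add_one, h]
    simp [sw, h, h1]
  · obtain ⟨m, rfl⟩ := h
    have h1 : ¬ Even (2*m+1) := by simp [Nat.even_add_one]
    have h2 : Even (2*m) := even_two_mul m
    simp [sw, h1, h2]

def swE : ℕ ≃ ℕ := ⟨sw, sw, sw_sw, sw_sw⟩

def eps (n : ℕ) : ℝ := if Even n then 1 else -1

lemma abs_eps (n : ℕ) : |eps n| = 1 := by
  unfold eps; split <;> simp

lemma eps_sq (n : ℕ) : eps n ^ 2 = 1 := by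
  unfold eps; split <;> norm_num

lemma eps_sw (n : ℕ) : eps (sw n) = - eps n := by
  rcases Nat.even_or_odd n with h | h
  · have h1 : ¬ Even (n+1) := by simp [Nat.even_add_one, h]
    simp [sw, eps, h, h1]
  · obtain ⟨m, rfl⟩ := h
    have h1 : ¬ Even (2*m+1) := by simp [Nat.even_add_one]
    have h2 : Even (2*m) := even_two_mul m
    simp [sw, eps, h1, h2]

def Tfun (f : ℕ → ℝ) : ℕ → ℝ := fun n => eps n * f (sw n)

variable (q : ℝ) [Fact (1 ≤ ENNReal.ofReal q)]

abbrev E := lp (fun _ : ℕ => ℝ) (ENNReal.ofReal q)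
abbrev F := PiLp (ENNReal.ofReal q) (fun _ : Fin 3 => E q)

lemma one_le_q : 1 ≤ q := by
  by_contra h
  push_neg at h
  have : ENNReal.ofReal q < 1 := ENNReal.ofReal_lt_one.2 h
  exact absurd (Fact.out : 1 ≤ ENNReal.ofReal q) (not_le.2 this)

lemma q_pos : 0 < q := lt_of_lt_of_le one_pos (one_le_q q)

lemma toReal_p : (ENNReal.ofReal q).toReal = q :=
  ENNReal.toReal_ofReal (q_pos q).le

lemma ptr_pos : 0 < (ENNReal.ofReal q).toReal := by
  rw [toReal_p]; exact q_pos q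

/-! ### The signed pair-swap isometry `T` of `ℓ_q`. -/

lemma memT (f : ℕ → ℝ) (hf : Memℓp f (ENNReal.ofReal q)) :
    Memℓp (Tfun f) (ENNReal.ofReal q) := by
  apply memℓp_gen
  have hs : Summable fun n => ‖f n‖ ^ (ENNReal.ofReal q).toReal :=
    (memℓp_gen_iff (ptr_pos q)).1 hf
  have h2 : (fun n => ‖Tfun f n‖ ^ (ENNReal.ofReal q).toReal)
      = fun n => ‖f (swE n)‖ ^ (ENNReal.ofReal q).toReal := by
    funext n
    simp [Tfun, swE, norm_mul, Real.norm_eq_abs, abs_eps]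
  rw [h2]
  exact (swE.summable_iff (f := fun n => ‖f n‖ ^ (ENNReal.ofReal q).toReal)).2 hs

def T : E q →ₗ[ℝ] E q where
  toFun f := ⟨Tfun f, memT q (f : ∀ _ : ℕ, ℝ) (lp.memℓp f)⟩
  map_add' f g := by
    ext n
    simp [Tfun]
    show _ = Tfun (f : ℕ → ℝ) n + Tfun (g : ℕ → ℝ) n
    unfold Tfun
    ring
  map_smul' c f := by
    ext n
    simp [Tfun]
    ring

lemma T_apply (f : E q) (n : ℕ) : (T q f : ℕ → ℝ) n = eps n * f (sw n) := rfl

lemma T_T (f : E q) : T q (T q f) = -f := by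
  ext n
  simp only [T_apply, sw_sw, lp.coeFn_neg, Pi.neg_apply]
  rw [eps_sw]
  have h : eps n * (-eps n * (f : ℕ → ℝ) n) = -(eps n ^ 2) * (f : ℕ → ℝ) n := by ring
  rw [h, eps_sq]
  ring

lemma T_norm (f : E q) : ‖T q f‖ = ‖f‖ := by
  rw [lp.norm_eq_tsum_rpow (ptr_pos q), lp.norm_eq_tsum_rpow (ptr_pos q)]
  congr 1
  have h2 : (fun n => ‖(T q f : ℕ → ℝ) n‖ ^ (ENNReal.ofReal q).toReal)
      = fun n => ‖f (swE n)‖ ^ (ENNReal.ofReal q).toReal := by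
    funext n
    simp [T_apply, swE, norm_mul, Real.norm_eq_abs, abs_eps]
  rw [h2]
  exact swE.tsum_eq (f := fun n => ‖f n‖ ^ (ENNReal.ofReal q).toReal)

def Tc : E q →L[ℝ] E q :=
  (T q).mkContinuous 1 (fun f => by rw [T_norm, one_mul])

lemma Tc_apply (f : E q) : Tc q f = T q f := rfl

lemma Tc_Tc (f : E q) : Tc q (Tc q f) = -f := T_T q f

/-! ### The two families of linear maps. -/

def rotB (a b : ℝ) : F q →ₗ[ℝ] F q where
  toFun x := WithLp.toLp _ ![x 0, a • x 1 + b • x 2, (-b) • x 1 + a • x 2]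
  map_add' x y := by
    ext i : 1
    fin_cases i <;>
      simp [PiLp.add_apply, Matrix.cons_val_zero, Matrix.cons_val_one, Matrix.head_cons,
        Matrix.cons_val_two, Matrix.tail_cons, smul_add] <;> abel
  map_smul' c x := by
    ext i : 1
    fin_cases i <;>
      simp [PiLp.smul_apply, Matrix.cons_val_zero, Matrix.cons_val_one, Matrix.head_cons,
        Matrix.cons_val_two, Matrix.tail_cons, smul_comm c] <;> abel

def rotA (a b : ℝ) : F q →ₗ[ℝ] F q where
  toFun x := WithLp.toLp _ ![x 0, x 1, a • x 2 + b • Tc q (x 2)]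
  map_add' x y := by
    ext i : 1
    fin_cases i <;>
      simp [PiLp.add_apply, Matrix.cons_val_zero, Matrix.cons_val_one, Matrix.head_cons,
        Matrix.cons_val_two, Matrix.tail_cons, smul_add] <;> abel
  map_smul' c x := by
    ext i : 1
    fin_cases i <;>
      simp [PiLp.smul_apply, Matrix.cons_val_zero, Matrix.cons_val_one, Matrix.head_cons,
        Matrix.cons_val_two, Matrix.tail_cons, smul_comm c] <;> abel

lemma rotB_apply0 (a b : ℝ) (x : F q) : rotB q a b x 0 = x 0 := rfl
lemma rotB_apply1 (a b : ℝ) (x : F q) : rotB q a b x 1 = a • x 1 + b • x 2 := rfl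
lemma rotB_apply2 (a b : ℝ) (x : F q) : rotB q a b x 2 = (-b) • x 1 + a • x 2 := rfl
lemma rotA_apply0 (a b : ℝ) (x : F q) : rotA q a b x 0 = x 0 := rfl
lemma rotA_apply1 (a b : ℝ) (x : F q) : rotA q a b x 1 = x 1 := rfl
lemma rotA_apply2 (a b : ℝ) (x : F q) : rotA q a b x 2 = a • x 2 + b • Tc q (x 2) := rfl

lemma contB (a b : ℝ) : Continuous (rotB q a b) := by
  apply (PiLp.continuous_toLp _ _).comp
  apply continuous_pi
  intro i
  fin_cases i
  · exact PiLp.continuous_apply _ _ (0 : Fin 3)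
  · exact ((PiLp.continuous_apply _ _ (1 : Fin 3)).const_smul a).add
      ((PiLp.continuous_apply _ _ (2 : Fin 3)).const_smul b)
  · exact ((PiLp.continuous_apply _ _ (1 : Fin 3)).const_smul (-b)).add
      ((PiLp.continuous_apply _ _ (2 : Fin 3)).const_smul a)

lemma contA (a b : ℝ) : Continuous (rotA q a b) := by
  apply (PiLp.continuous_toLp _ _).comp
  apply continuous_pi
  intro i
  fin_cases i
  · exact PiLp.continuous_apply _ _ (0 : Fin 3)
  · exact PiLp.continuous_apply _ _ (1 : Fin 3)
  · exact ((PiLp.continuous_apply _ _ (2 : Fin 3)).const_smul a).add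
      (((Tc q).continuous.comp (PiLp.continuous_apply _ _ (2 : Fin 3))).const_smul b)

def Bcl (a b : ℝ) : F q →L[ℝ] F q := ⟨rotB q a b, contB q a b⟩
def Acl (a b : ℝ) : F q →L[ℝ] F q := ⟨rotA q a b, contA q a b⟩

lemma Bcl_apply (a b : ℝ) (x : F q) : Bcl q a b x = rotB q a b x := rfl
lemma Acl_apply (a b : ℝ) (x : F q) : Acl q a b x = rotA q a b x := rfl

/-! ### The two families of equivalences. -/

def bE (θ : ℝ) : F q ≃L[ℝ] F q :=
  ContinuousLinearEquiv.equivOfInverse (Bcl q (cos θ) (sin θ)) (Bcl q (cos θ) (-sin θ))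
    (fun x => by
      ext i : 1
      have h := sin_sq_add_cos_sq θ
      fin_cases i
      · rfl
      · show (cos θ) • ((cos θ) • x 1 + (sin θ) • x 2)
            + (-sin θ) • ((-(sin θ)) • x 1 + (cos θ) • x 2) = x 1
        match_scalars <;> nlinarith [h]
      · show (-(-sin θ)) • ((cos θ) • x 1 + (sin θ) • x 2)
            + (cos θ) • ((-(sin θ)) • x 1 + (cos θ) • x 2) = x 2
        match_scalars <;> nlinarith [h])
    (fun x => by
      ext i : 1
      have h := sin_sq_add_cos_sq θ
      fin_cases i
      · rfl
      · show (cos θ) • ((cos θ) • x 1 + (-sin θ) • x 2)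
            + (sin θ) • ((-(-sin θ)) • x 1 + (cos θ) • x 2) = x 1
        match_scalars <;> nlinarith [h]
      · show (-sin θ) • ((cos θ) • x 1 + (-sin θ) • x 2)
            + (cos θ) • ((-(-sin θ)) • x 1 + (cos θ) • x 2) = x 2
        match_scalars <;> nlinarith [h])

def aE (φ : ℝ) : F q ≃L[ℝ] F q :=
  ContinuousLinearEquiv.equivOfInverse (Acl q (cos φ) (sin φ)) (Acl q (cos φ) (-sin φ))
    (fun x => by
      ext i : 1
      have h := sin_sq_add_cos_sq φ
      fin_cases i
      · rfl
      · rfl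
      · show (cos φ) • ((cos φ) • x 2 + (sin φ) • Tc q (x 2))
            + (-sin φ) • Tc q ((cos φ) • x 2 + (sin φ) • Tc q (x 2)) = x 2
        rw [map_add, map_smul, map_smul, Tc_Tc]
        match_scalars <;> nlinarith [h]
    )
    (fun x => by
      ext i : 1
      have h := sin_sq_add_cos_sq φ
      fin_cases i
      · rfl
      · rfl
      · show (cos φ) • ((cos φ) • x 2 + (-sin φ) • Tc q (x 2))
            + (sin φ) • Tc q ((cos φ) • x 2 + (-sin φ) • Tc q (x 2)) = x 2
        rw [map_add, map_smul, map_smul, Tc_Tc]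
        match_scalars <;> nlinarith [h]
    )

lemma bE_coe (θ : ℝ) : (bE q θ : F q →L[ℝ] F q) = Bcl q (cos θ) (sin θ) := rfl
lemma aE_coe (φ : ℝ) : (aE q φ : F q →L[ℝ] F q) = Acl q (cos φ) (sin φ) := rfl

/-! ### Affine decomposition for continuity. -/

lemma Bcl_eq (a b : ℝ) :
    Bcl q a b = Bcl q 0 0 + a • (Bcl q 1 0 - Bcl q 0 0) + b • (Bcl q 0 1 - Bcl q 0 0) := by
  refine ContinuousLinearMap.ext fun x => PiLp.ext fun i => ?_
  fin_cases i <;>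
    simp [Bcl_apply, rotB_apply0, rotB_apply1, rotB_apply2, PiLp.add_apply,
      PiLp.smul_apply, ContinuousLinearMap.add_apply, ContinuousLinearMap.smul_apply,
      ContinuousLinearMap.sub_apply] <;> module

lemma Acl_eq (a b : ℝ) :
    Acl q a b = Acl q 0 0 + a • (Acl q 1 0 - Acl q 0 0) + b • (Acl q 0 1 - Acl q 0 0) := by
  refine ContinuousLinearMap.ext fun x => PiLp.ext fun i => ?_
  fin_cases i <;>
    simp [Acl_apply, rotA_apply0, rotA_apply1, rotA_apply2, PiLp.add_apply,
      PiLp.smul_apply, ContinuousLinearMap.add_apply, ContinuousLinearMap.smul_apply,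
      ContinuousLinearMap.sub_apply] <;> module

lemma contBcl {g h : ℝ → ℝ} (hg : Continuous g) (hh : Continuous h) :
    Continuous fun t => Bcl q (g t) (h t) := by
  have he : (fun t => Bcl q (g t) (h t))
      = fun t => Bcl q 0 0 + (g t) • (Bcl q 1 0 - Bcl q 0 0) + (h t) • (Bcl q 0 1 - Bcl q 0 0) :=
    funext fun t => Bcl_eq q (g t) (h t)
  rw [he]
  exact (continuous_const.add (hg.smul continuous_const)).add (hh.smul continuous_const)

lemma contAcl {g h : ℝ → ℝ} (hg : Continuous g) (hh : Continuous h) :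
    Continuous fun t => Acl q (g t) (h t) := by
  have he : (fun t => Acl q (g t) (h t))
      = fun t => Acl q 0 0 + (g t) • (Acl q 1 0 - Acl q 0 0) + (h t) • (Acl q 0 1 - Acl q 0 0) :=
    funext fun t => Acl_eq q (g t) (h t)
  rw [he]
  exact (continuous_const.add (hg.smul continuous_const)).add (hh.smul continuous_const)

/-! ### Norm estimates. -/

lemma F_norm (x : F q) : ‖x‖ = (‖x 0‖ ^ q + ‖x 1‖ ^ q + ‖x 2‖ ^ q) ^ (1/q) := by
  rw [PiLp.norm_eq_sum (ptr_pos q), toReal_p, Fin.sum_univ_three]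

lemma two_conv (a b : ℝ) (ha : 0 ≤ a) (hb : 0 ≤ b) :
    (a + b) ^ q ≤ 2 ^ (q - 1) * (a ^ q + b ^ q) := by
  have h := NNReal.rpow_add_le_mul_rpow_add_rpow (⟨a, ha⟩ : ℝ≥0) (⟨b, hb⟩ : ℝ≥0) (one_le_q q)
  have := NNReal.coe_le_coe.2 h
  push_cast at this
  convert this using 2 <;> norm_num <;> rfl

lemma key (x y : F q) (h0 : ‖y 0‖ ≤ ‖x 0‖)
    (h12 : ‖y 1‖ ^ q + ‖y 2‖ ^ q ≤ 2 ^ q * (‖x 1‖ ^ q + ‖x 2‖ ^ q)) :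
    ‖y‖ ≤ 2 * ‖x‖ := by
  have hq0 : 0 < q := q_pos q
  have h2q : (1:ℝ) ≤ 2 ^ q := Real.one_le_rpow one_le_two hq0.le
  rw [F_norm, F_norm]
  have hsum : ‖y 0‖ ^ q + ‖y 1‖ ^ q + ‖y 2‖ ^ q
      ≤ 2 ^ q * (‖x 0‖ ^ q + ‖x 1‖ ^ q + ‖x 2‖ ^ q) := by
    have e0 : ‖y 0‖ ^ q ≤ ‖x 0‖ ^ q := Real.rpow_le_rpow (norm_nonneg _) h0 hq0.le
    have e0' : ‖x 0‖ ^ q ≤ 2 ^ q * ‖x 0‖ ^ q := le_mul_of_one_le_left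
      (Real.rpow_nonneg (norm_nonneg _) q) h2q
    nlinarith [e0, e0', h12]
  calc (‖y 0‖ ^ q + ‖y 1‖ ^ q + ‖y 2‖ ^ q) ^ (1/q)
      ≤ (2 ^ q * (‖x 0‖ ^ q + ‖x 1‖ ^ q + ‖x 2‖ ^ q)) ^ (1/q) := by
        apply Real.rpow_le_rpow _ hsum (by positivity)
        positivity
    _ = 2 * (‖x 0‖ ^ q + ‖x 1‖ ^ q + ‖x 2‖ ^ q) ^ (1/q) := by
        have h22 : ((2:ℝ) ^ q) ^ (1/q) = 2 := by
          rw [← Real.rpow_mul (by norm_num : (0:ℝ) ≤ 2), mul_one_div, div_self hq0.ne',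
            Real.rpow_one]
        rw [Real.mul_rpow (by positivity) (by positivity), h22]

lemma abs_rpow_le_one {c : ℝ} (hc : |c| ≤ 1) : |c| ^ q ≤ 1 :=
  Real.rpow_le_one (abs_nonneg c) hc (q_pos q).le

lemma sum_sq_bound (c s a b : ℝ) (hc : |c| ≤ 1) (hs : |s| ≤ 1) (ha : 0 ≤ a) (hb : 0 ≤ b) :
    (|c| * a + |s| * b) ^ q + (|s| * a + |c| * b) ^ q ≤ 2 ^ q * (a ^ q + b ^ q) := by
  have hq0 : 0 < q := q_pos q
  have e1 : (|c| * a + |s| * b) ^ q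
      ≤ 2 ^ (q-1) * ((|c| * a) ^ q + (|s| * b) ^ q) :=
    two_conv q _ _ (by positivity) (by positivity)
  have e2 : (|s| * a + |c| * b) ^ q
      ≤ 2 ^ (q-1) * ((|s| * a) ^ q + (|c| * b) ^ q) :=
    two_conv q _ _ (by positivity) (by positivity)
  have m1 : (|c| * a) ^ q = |c| ^ q * a ^ q := Real.mul_rpow (abs_nonneg c) ha
  have m2 : (|s| * b) ^ q = |s| ^ q * b ^ q := Real.mul_rpow (abs_nonneg s) hb
  have m3 : (|s| * a) ^ q = |s| ^ q * a ^ q := Real.mul_rpow (abs_nonneg s) ha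
  have m4 : (|c| * b) ^ q = |c| ^ q * b ^ q := Real.mul_rpow (abs_nonneg c) hb
  have hc1 : |c| ^ q ≤ 1 := abs_rpow_le_one q hc
  have hs1 : |s| ^ q ≤ 1 := abs_rpow_le_one q hs
  have hcn : 0 ≤ |c| ^ q := by positivity
  have hsn : 0 ≤ |s| ^ q := by positivity
  have han : 0 ≤ a ^ q := by positivity
  have hbn : 0 ≤ b ^ q := by positivity
  have h2 : (2:ℝ) ^ (q-1) * 2 = 2 ^ q := by
    have h' : (2:ℝ) ^ (q - 1 + 1) = 2 ^ (q-1) * 2 ^ (1:ℝ) := Real.rpow_add (by norm_num) _ _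
    rw [Real.rpow_one] at h'
    simpa using h'.symm
  have hpow : (0:ℝ) ≤ 2 ^ (q-1) := by positivity
  calc (|c| * a + |s| * b) ^ q + (|s| * a + |c| * b) ^ q
      ≤ 2 ^ (q-1) * ((|c| ^ q + |s| ^ q) * (a ^ q + b ^ q)) := by
        rw [m1, m2] at e1
        rw [m3, m4] at e2
        nlinarith [e1, e2]
    _ ≤ 2 ^ (q-1) * (2 * (a ^ q + b ^ q)) := by
        apply mul_le_mul_of_nonneg_left _ hpow
        nlinarith
    _ = 2 ^ q * (a ^ q + b ^ q) := by rw [← h2]; ring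

lemma norm_smul_le' (c : ℝ) (v : E q) (hc : |c| ≤ 1) : ‖c • v‖ ≤ ‖v‖ := by
  rw [norm_smul, Real.norm_eq_abs]
  exact mul_le_of_le_one_left (norm_nonneg v) hc

/-! ### The path. -/

def theta (τ : ℝ) : ℝ := (Real.pi / 2) * min (4 * τ) 1
def phi (τ : ℝ) : ℝ := Real.pi * max (4 * τ - 1) 0

lemma cont_theta : Continuous theta :=
  continuous_const.mul ((continuous_const.mul continuous_id).min continuous_const)

lemma cont_phi : Continuous phi :=
  continuous_const.mul (((continuous_const.mul continuous_id).sub continuous_const).max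
    continuous_const)

def V (τ : ℝ) : F q ≃L[ℝ] F q := (bE q (theta τ)).trans (aE q (phi τ))

lemma V_coe (τ : ℝ) : (V q τ : F q →L[ℝ] F q)
    = (Acl q (cos (phi τ)) (sin (phi τ))).comp (Bcl q (cos (theta τ)) (sin (theta τ))) := rfl

lemma V_cont : Continuous fun τ => (V q τ : F q →L[ℝ] F q) := by
  simp only [V_coe]
  exact Continuous.clm_comp
    (contAcl q (Real.continuous_cos.comp cont_phi) (Real.continuous_sin.comp cont_phi))
    (contBcl q (Real.continuous_cos.comp cont_theta) (Real.continuous_sin.comp cont_theta))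

lemma theta_zero : theta 0 = 0 := by
  simp [theta, min_eq_left (by norm_num : (4:ℝ) * 0 ≤ 1)]

lemma phi_zero : phi 0 = 0 := by
  simp [phi, max_eq_right (by norm_num : (4:ℝ) * 0 - 1 ≤ 0)]

lemma V_zero : V q 0 = ContinuousLinearEquiv.refl ℝ (F q) := by
  refine ContinuousLinearEquiv.ext (funext fun x => ?_)
  show rotA q (cos (phi 0)) (sin (phi 0)) (rotB q (cos (theta 0)) (sin (theta 0)) x) = x
  rw [theta_zero, phi_zero, cos_zero, sin_zero]
  ext i : 1
  fin_cases i
  · rfl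
  · show (1:ℝ) • x 1 + (0:ℝ) • x 2 = x 1
    simp
  · show (1:ℝ) • ((-(0:ℝ)) • x 1 + (1:ℝ) • x 2) + (0:ℝ) • Tc q ((-(0:ℝ)) • x 1 + (1:ℝ) • x 2) = x 2
    simp

lemma theta_half : theta (1/2) = Real.pi / 2 := by
  rw [theta, min_eq_right (by norm_num : (1:ℝ) ≤ 4 * (1/2))]
  ring

lemma phi_half : phi (1/2) = Real.pi := by
  rw [phi, max_eq_left (by norm_num : (0:ℝ) ≤ 4 * (1/2) - 1)]
  ring

lemma V_half (x : F q) :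
    V q (1/2) x 0 = x 0 ∧ V q (1/2) x 1 = x 2 ∧ V q (1/2) x 2 = x 1 := by
  have h : V q (1/2) x
      = rotA q (cos (phi (1/2))) (sin (phi (1/2)))
          (rotB q (cos (theta (1/2))) (sin (theta (1/2))) x) := rfl
  rw [theta_half, phi_half, cos_pi, sin_pi, cos_pi_div_two, sin_pi_div_two] at h
  refine ⟨?_, ?_, ?_⟩
  · rw [h]; rfl
  · rw [h]
    show (0:ℝ) • x 1 + (1:ℝ) • x 2 = x 2
    simp
  · rw [h]
    show (-1:ℝ) • ((-(1:ℝ)) • x 1 + (0:ℝ) • x 2) + (0:ℝ) • Tc q ((-(1:ℝ)) • x 1 + (0:ℝ) • x 2) = x 1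
    simp

set_option maxHeartbeats 1000000 in
lemma V_norm_le (τ : ℝ) (hτ0 : 0 ≤ τ) (hτ1 : τ ≤ 1/2) :
    ‖(V q τ : F q →L[ℝ] F q)‖ ≤ 2 := by
  apply ContinuousLinearMap.opNorm_le_bound _ (by norm_num)
  intro x
  rcases le_total τ (1/4) with hc | hc
  · -- φ τ = 0, V = rotB
    have hφ : phi τ = 0 := by
      rw [phi, max_eq_right (by linarith)]
      ring
    have hy : (V q τ : F q →L[ℝ] F q) x
        = rotB q (cos (theta τ)) (sin (theta τ)) x := by
      show rotA q (cos (phi τ)) (sin (phi τ)) (rotB q (cos (theta τ)) (sin (theta τ)) x)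
          = rotB q (cos (theta τ)) (sin (theta τ)) x
      rw [hφ, cos_zero, sin_zero]
      set y := rotB q (cos (theta τ)) (sin (theta τ)) x
      ext i : 1
      fin_cases i
      · rfl
      · rfl
      · show (1:ℝ) • y 2 + (0:ℝ) • Tc q (y 2) = y 2
        simp
    rw [hy]
    set c := cos (theta τ) with hcdef
    set s := sin (theta τ) with hsdef
    set y := rotB q c s x with hydef
    apply key q x y (le_of_eq (by rw [hydef]; rfl))
    have hy1 : ‖y 1‖ ≤ |c| * ‖x 1‖ + |s| * ‖x 2‖ := by
      rw [hydef]
      refine (norm_add_le _ _).trans ?_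
      rw [norm_smul, norm_smul, Real.norm_eq_abs, Real.norm_eq_abs]
    have hy2 : ‖y 2‖ ≤ |s| * ‖x 1‖ + |c| * ‖x 2‖ := by
      rw [hydef]
      refine (norm_add_le _ _).trans ?_
      rw [norm_smul, norm_smul, Real.norm_eq_abs, Real.norm_eq_abs, abs_neg]
    have e1 : ‖y 1‖ ^ q ≤ (|c| * ‖x 1‖ + |s| * ‖x 2‖) ^ q :=
      Real.rpow_le_rpow (norm_nonneg _) hy1 (q_pos q).le
    have e2 : ‖y 2‖ ^ q ≤ (|s| * ‖x 1‖ + |c| * ‖x 2‖) ^ q :=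
      Real.rpow_le_rpow (norm_nonneg _) hy2 (q_pos q).le
    have := sum_sq_bound q c s (‖x 1‖) (‖x 2‖) (abs_cos_le_one _) (abs_sin_le_one _)
      (norm_nonneg _) (norm_nonneg _)
    linarith
  · -- θ τ = π/2, V x = (x0, x2, c•(−x1) + s•T(−x1))
    have hθ : theta τ = Real.pi / 2 := by
      rw [theta, min_eq_right (by linarith)]
      ring
    set c := cos (phi τ) with hcdef
    set s := sin (phi τ) with hsdef
    set y := (V q τ : F q →L[ℝ] F q) x with hydef
    have hy0 : y 0 = x 0 := by rw [hydef]; rfl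
    have hy1 : y 1 = (0:ℝ) • x 1 + (1:ℝ) • x 2 := by
      rw [hydef]
      show rotB q (cos (theta τ)) (sin (theta τ)) x 1 = _
      rw [hθ, cos_pi_div_two, sin_pi_div_two]
      rfl
    have hy2 : y 2 = c • ((-(1:ℝ)) • x 1 + (0:ℝ) • x 2)
        + s • Tc q ((-(1:ℝ)) • x 1 + (0:ℝ) • x 2) := by
      rw [hydef]
      show rotA q c s (rotB q (cos (theta τ)) (sin (theta τ)) x) 2 = _
      rw [hθ, cos_pi_div_two, sin_pi_div_two]
      rfl
    apply key q x y (le_of_eq (by rw [hy0]))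
    have n1 : ‖y 1‖ = ‖x 2‖ := by rw [hy1]; simp
    have n2 : ‖y 2‖ ≤ 2 * ‖x 1‖ := by
      rw [hy2]
      have hz : ((-(1:ℝ)) • x 1 + (0:ℝ) • x 2) = -(x 1) := by
        module
      rw [hz]
      refine (norm_add_le _ _).trans ?_
      have b1 : ‖c • (-(x 1))‖ ≤ ‖x 1‖ := by
        rw [norm_smul, Real.norm_eq_abs, norm_neg]
        exact mul_le_of_le_one_left (norm_nonneg _) (abs_cos_le_one _)
      have b2 : ‖s • Tc q (-(x 1))‖ ≤ ‖x 1‖ := by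
        rw [norm_smul, Real.norm_eq_abs, Tc_apply, T_norm, norm_neg]
        exact mul_le_of_le_one_left (norm_nonneg _) (abs_sin_le_one _)
      linarith
    have hq0 : 0 < q := q_pos q
    have h2q : (1:ℝ) ≤ 2 ^ q := Real.one_le_rpow one_le_two hq0.le
    have e1 : ‖y 1‖ ^ q = ‖x 2‖ ^ q := by rw [n1]
    have e2 : ‖y 2‖ ^ q ≤ (2 * ‖x 1‖) ^ q :=
      Real.rpow_le_rpow (norm_nonneg _) n2 hq0.le
    have e3 : (2 * ‖x 1‖) ^ q = 2 ^ q * ‖x 1‖ ^ q :=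
      Real.mul_rpow (by norm_num) (norm_nonneg _)
    have e4 : ‖x 2‖ ^ q ≤ 2 ^ q * ‖x 2‖ ^ q :=
      le_mul_of_one_le_left (by positivity) h2q
    nlinarith [e1, e2, e3, e4]

end PathAux
end

set_option maxHeartbeats 1000000 in
theorem exists_path_of_invertibles (q : ℝ) (hq : 1 ≤ q) :
    ∃ V : ℝ → (tripleSum q hq ≃L[ℝ] tripleSum q hq),
      ContinuousOn (fun τ => (V τ : tripleSum q hq →L[ℝ] tripleSum q hq))
        (Set.Icc 0 (1/2)) ∧
      V 0 = ContinuousLinearEquiv.refl ℝ (tripleSum q hq) ∧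
      (∀ x : tripleSum q hq,
        (WithLp.ofLp (p := ENNReal.ofReal q) (V (1/2) x) : Fin 3 → lpSeq q hq) 0 = (WithLp.ofLp (p := ENNReal.ofReal q) x : Fin 3 → lpSeq q hq) 0 ∧
        (WithLp.ofLp (p := ENNReal.ofReal q) (V (1/2) x) : Fin 3 → lpSeq q hq) 1 = (WithLp.ofLp (p := ENNReal.ofReal q) x : Fin 3 → lpSeq q hq) 2 ∧
        (WithLp.ofLp (p := ENNReal.ofReal q) (V (1/2) x) : Fin 3 → lpSeq q hq) 2 = (WithLp.ofLp (p := ENNReal.ofReal q) x : Fin 3 → lpSeq q hq) 1) ∧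
      ∀ τ ∈ Set.Icc (0:ℝ) (1/2),
        ‖(V τ : tripleSum q hq →L[ℝ] tripleSum q hq)‖ ≤ 2 := by
  haveI : Fact (1 ≤ ENNReal.ofReal q) :=
    ⟨by simpa [ENNReal.ofReal_one] using ENNReal.ofReal_le_ofReal hq⟩
  refine ⟨fun τ => PathAux.V q τ, ?_, ?_, ?_, ?_⟩
  · exact (PathAux.V_cont q).continuousOn
  · exact PathAux.V_zero q
  · intro x
    exact PathAux.V_half q x
  · intro τ hτ
    exact PathAux.V_norm_le q τ hτ.1 hτ.2
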